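/- Let t, α, β be positive real numbers with t^β > 2t^α, and let v ∈ ℝ^{n+1} satisfy r(v) = t^{α−1−β} and h(v) = t^α. Then every point x ∈ ℝ^{n+1} with r(x) < t and t^{−β} ≤ h(x) ≤ t^{−α} − t^{−β} satisfies 0 < |⟨v, x⟩| < 1, where ⟨·,·⟩ is the standard inner product on ℝ^{n+1}; in particular, no such x is an integer point. -/

import Mathlib

open scoped RealInnerProductSpace

/-- The vector `(1, θ₁, …, θₙ) ∈ ℝ^{n+1}`. -/
noncomputable def thetaVec (n : ℕ) (θ : Fin n → ℝ) : EuclideanSpace ℝ (Fin (n+1)) :=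
  (EuclideanSpace.equiv (Fin (n+1)) ℝ).symm (Fin.cons 1 θ)

/-- The line `ℓ` spanned by `(1, θ₁, …, θₙ)`. -/
noncomputable def lineTheta (n : ℕ) (θ : Fin n → ℝ) :
    Submodule ℝ (EuclideanSpace ℝ (Fin (n+1))) :=
  Submodule.span ℝ {thetaVec n θ}

/-- `r(x)`: the Euclidean distance from `x` to the line `ℓ`. -/
noncomputable def rdist (n : ℕ) (θ : Fin n → ℝ) (x : EuclideanSpace ℝ (Fin (n+1))) : ℝ :=
  Metric.infDist x (lineTheta n θ : Set (EuclideanSpace ℝ (Fin (n+1))))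

/-- `h(x)`: the Euclidean distance from `x` to `ℓ^⊥`. -/
noncomputable def hdist (n : ℕ) (θ : Fin n → ℝ) (x : EuclideanSpace ℝ (Fin (n+1))) : ℝ :=
  Metric.infDist x ((lineTheta n θ)ᗮ : Set (EuclideanSpace ℝ (Fin (n+1))))

/-- `x ∈ ℤ^{n+1}`: all coordinates of `x` are integers. -/
def IsIntegerPoint (n : ℕ) (x : EuclideanSpace ℝ (Fin (n+1))) : Prop :=
  ∀ i, ∃ m : ℤ, x i = (m : ℝ)

lemma infDist_submodule {E : Type*} [NormedAddCommGroup E] [InnerProductSpace ℝ E]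
    (K : Submodule ℝ E) [Submodule.HasOrthogonalProjection K] (x : E) :
    Metric.infDist x (K : Set E) = ‖x - Submodule.orthogonalProjection K x‖ := by
  rw [← Submodule.starProjection_apply, Submodule.starProjection_minimal, Metric.infDist_eq_iInf]
  simp [dist_eq_norm]

lemma rdist_eq (n : ℕ) (θ : Fin n → ℝ) (x : EuclideanSpace ℝ (Fin (n+1))) :
    rdist n θ x = ‖x - Submodule.orthogonalProjection (lineTheta n θ) x‖ :=
  infDist_submodule _ x

lemma hdist_eq (n : ℕ) (θ : Fin n → ℝ) (x : EuclideanSpace ℝ (Fin (n+1))) :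
    hdist n θ x = ‖(Submodule.orthogonalProjection (lineTheta n θ) x : EuclideanSpace ℝ (Fin (n+1)))‖ := by
  rw [hdist, infDist_submodule, Submodule.orthogonalProjection_orthogonal]
  congr 1
  exact sub_sub_cancel _ _

lemma inner_split (n : ℕ) (θ : Fin n → ℝ) (v x : EuclideanSpace ℝ (Fin (n+1))) :
    ⟪v, x⟫ = ⟪(Submodule.orthogonalProjection (lineTheta n θ) v : EuclideanSpace ℝ (Fin (n+1))),
        (Submodule.orthogonalProjection (lineTheta n θ) x : EuclideanSpace ℝ (Fin (n+1)))⟫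
      + ⟪v - Submodule.orthogonalProjection (lineTheta n θ) v, x - Submodule.orthogonalProjection (lineTheta n θ) x⟫ := by
  set K := lineTheta n θ
  set Pv := (Submodule.orthogonalProjection K v : EuclideanSpace ℝ (Fin (n+1)))
  set Px := (Submodule.orthogonalProjection K x : EuclideanSpace ℝ (Fin (n+1)))
  have hcross1 : ⟪Pv, x - Px⟫ = 0 :=
    Submodule.inner_right_of_mem_orthogonal (Submodule.orthogonalProjection K v).2
      (Submodule.sub_starProjection_mem_orthogonal x)
  have hcross2 : ⟪v - Pv, Px⟫ = 0 :=
    Submodule.inner_left_of_mem_orthogonal (Submodule.orthogonalProjection K x).2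
      (Submodule.sub_starProjection_mem_orthogonal v)
  have : v = Pv + (v - Pv) := by abel
  rw [this, show x = Px + (x - Px) by abel, inner_add_left, inner_add_right, inner_add_right,
    hcross1, hcross2]
  simp

lemma abs_inner_span {E : Type*} [NormedAddCommGroup E] [InnerProductSpace ℝ E]
    {u a b : E} (ha : a ∈ Submodule.span ℝ {u}) (hb : b ∈ Submodule.span ℝ {u}) :
    |⟪a, b⟫| = ‖a‖ * ‖b‖ := by
  obtain ⟨c, rfl⟩ := Submodule.mem_span_singleton.1 ha
  obtain ⟨d, rfl⟩ := Submodule.mem_span_singleton.1 hb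
  simp only [real_inner_smul_left, real_inner_smul_right, real_inner_self_eq_norm_sq,
    norm_smul, abs_mul, Real.norm_eq_abs, sq, abs_mul, abs_norm]
  ring

theorem stmt0 (n : ℕ) (hn : 2 ≤ n) (θ : Fin n → ℝ) (t α β : ℝ)
    (ht : 0 < t) (hα : 0 < α) (hβ : 0 < β)
    (htβα : 2 * t ^ α < t ^ β)
    (v : EuclideanSpace ℝ (Fin (n+1)))
    (hrv : rdist n θ v = t ^ (α - 1 - β))
    (hhv : hdist n θ v = t ^ α)
    (x : EuclideanSpace ℝ (Fin (n+1)))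
    (hrx : rdist n θ x < t)
    (hhx₁ : t ^ (-β) ≤ hdist n θ x)
    (hhx₂ : hdist n θ x ≤ t ^ (-α) - t ^ (-β)) :
    0 < |⟪v, x⟫| ∧ |⟪v, x⟫| < 1 ∧ (IsIntegerPoint n v → ¬ IsIntegerPoint n x) := by
  set K := lineTheta n θ with hK
  set Pv := (Submodule.orthogonalProjection K v : EuclideanSpace ℝ (Fin (n+1))) with hPv
  set Px := (Submodule.orthogonalProjection K x : EuclideanSpace ℝ (Fin (n+1))) with hPx
  have hsplit := inner_split n θ v x
  have habs1 : |⟪Pv, Px⟫| = hdist n θ v * hdist n θ x := by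
    rw [hdist_eq, hdist_eq]
    exact abs_inner_span (Submodule.orthogonalProjection K v).2 (Submodule.orthogonalProjection K x).2
  have habs2 : |⟪v - Pv, x - Px⟫| ≤ rdist n θ v * rdist n θ x := by
    rw [rdist_eq, rdist_eq]
    exact abs_real_inner_le_norm _ _
  have hlow : |⟪Pv, Px⟫| - |⟪v - Pv, x - Px⟫| ≤ |⟪v, x⟫| := by
    have h := abs_sub_abs_le_abs_sub ⟪Pv, Px⟫ (-⟪v - Pv, x - Px⟫)
    rw [abs_neg, sub_neg_eq_add, ← hsplit] at h
    exact h
  have hup : |⟪v, x⟫| ≤ |⟪Pv, Px⟫| + |⟪v - Pv, x - Px⟫| := by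
    rw [hsplit]; exact abs_add_le _ _
  -- arithmetic facts about rpow
  have e1 : t ^ α * t ^ (-β) = t ^ (α - β) := by
    rw [← Real.rpow_add ht]; ring_nf
  have e2 : t ^ (α - 1 - β) * t = t ^ (α - β) := by
    nth_rewrite 2 [← Real.rpow_one t]
    rw [← Real.rpow_add ht]; ring_nf
  have e3 : t ^ α * t ^ (-α) = 1 := by
    rw [← Real.rpow_add ht]; norm_num
  have hrvpos : (0:ℝ) < t ^ (α - 1 - β) := Real.rpow_pos_of_pos ht _
  have hhvpos : (0:ℝ) < t ^ α := Real.rpow_pos_of_pos ht _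
  have hrxnn : 0 ≤ rdist n θ x := Metric.infDist_nonneg
  have hhxnn : 0 ≤ hdist n θ x := Metric.infDist_nonneg
  -- product bounds
  have hprod1 : t ^ (α - β) ≤ hdist n θ v * hdist n θ x := by
    rw [hhv, ← e1]
    exact mul_le_mul_of_nonneg_left hhx₁ hhvpos.le
  have hprod2 : rdist n θ v * rdist n θ x < t ^ (α - β) := by
    rw [hrv, ← e2]
    exact mul_lt_mul_of_pos_left hrx hrvpos
  have hprod3 : hdist n θ v * hdist n θ x ≤ 1 - t ^ (α - β) := by
    rw [hhv]
    calc t ^ α * hdist n θ x ≤ t ^ α * (t ^ (-α) - t ^ (-β)) :=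
          mul_le_mul_of_nonneg_left hhx₂ hhvpos.le
      _ = 1 - t ^ (α - β) := by rw [mul_sub, e3, e1]
  have hpos : 0 < |⟪v, x⟫| := by
    rw [habs1] at hlow
    linarith
  have hlt : |⟪v, x⟫| < 1 := by
    rw [habs1] at hup
    linarith
  refine ⟨hpos, hlt, fun hvint hxint => ?_⟩
  choose mv hmv using hvint
  choose mx hmx using hxint
  have : ⟪v, x⟫ = ((∑ i, mv i * mx i : ℤ) : ℝ) := by
    rw [PiLp.inner_apply]
    push_cast
    refine Finset.sum_congr rfl fun i _ => ?_
    simp [RCLike.inner_apply, hmv i, hmx i, mul_comm]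
  rw [this] at hpos hlt
  have hne : (∑ i, mv i * mx i : ℤ) ≠ 0 := by
    intro h
    rw [h] at hpos
    simp at hpos
  have := Int.one_le_abs hne
  rw [← Int.cast_abs] at hlt
  have : (1:ℝ) ≤ ((|∑ i, mv i * mx i| : ℤ) : ℝ) := by exact_mod_cast this
  linarith
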